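/- Fix r ≥ 1, and for a cube Q write Q′ := rQ (the concentric cube with r times the sidelength). Let T be a linear operator such that for every ε > 0, every dyadic cube Q₀, and every f ∈ L¹(ℝ^N; ℝ) supported on Q₀′ there exists a collection G of pairwise disjoint dyadic subcubes of Q₀ satisfying: (1) Σ_{Q∈G} |Q| ≤ ε|Q₀|; (2) |Tf(x) − Σ_{Q∈G} 1_Q(x)·T(f·1_{Q′})(x)| ≤ C·ε⁻¹·⟨|f|⟩_{Q₀′} a.e. on Q₀, with C = C(T,N) independent of f; (3) the same bound as in (2) holds with G replaced by any collection Ḡ of pairwise disjoint dyadic subcubes of Q₀ that covers G (i.e. every Q ∈ G is contained in some R ∈ Ḡ). Then for every δ ∈ (0,1), every dyadic cube Q₀, and every f ∈ L¹(ℝ^N; ℝ^d) supported on Q₀′ there exists a family G₁ of pairwise disjoint dyadic subcubes of Q₀ with Σ_{Q∈G₁} |Q| ≤ δ|Q₀| and Tf(x) ∈ C′·⟨⟨f⟩⟩_{Q₀′} + Σ_{Q∈G₁} 1_Q(x)·T(f·1_{Q′})(x) a.e. on Q₀, where C′ = C′(T, N, d, δ) and T acts componentwise on vector-valued functions. -/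

import Mathlib

open MeasureTheory Set Matrix
open scoped ENNReal BigOperators NNReal Pointwise

noncomputable section

namespace CBD

/-- The Euclidean norm of a vector in `ℝ^n` given as a plain function. -/
def vnorm {n : ℕ} (v : Fin n → ℝ) : ℝ := Real.sqrt (∑ i, v i ^ 2)

/-- An axis-parallel half-open cube in `ℝ^N`. -/
structure Cube (N : ℕ) where
  corner : Fin N → ℝ
  side : ℝ
  side_pos : 0 < side

namespace Cube

variable {N : ℕ}

/-- The subset of `ℝ^N` determined by the cube. -/
def set (Q : Cube N) : Set (Fin N → ℝ) :=
  {x | ∀ i, Q.corner i ≤ x i ∧ x i < Q.corner i + Q.side}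

/-- The volume `|Q|` of the cube. -/
def vol (Q : Cube N) : ℝ := Q.side ^ N

/-- The concentric dilation `rQ` (intended for `r ≥ 1`; implemented with `max r 1`). -/
def dilate (Q : Cube N) (r : ℝ) : Cube N where
  corner := fun i => Q.corner i + Q.side / 2 - max r 1 * Q.side / 2
  side := max r 1 * Q.side
  side_pos := mul_pos (lt_of_lt_of_le one_pos (le_max_right r 1)) Q.side_pos

/-- `Q` belongs to the standard dyadic lattice `D`:
`Q = 2^{-k}([0,1)^N + m)` for some `k ∈ ℤ`, `m ∈ ℤ^N`. -/
def IsDyadic (Q : Cube N) : Prop :=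
  ∃ (k : ℤ) (m : Fin N → ℤ), Q.side = (2:ℝ) ^ (-k) ∧ ∀ i, Q.corner i = (2:ℝ) ^ (-k) * (m i : ℝ)

/-- The subcube of `Q` of dyadic generation `k` in position `m`. -/
def subCube (Q : Cube N) (k : ℕ) (m : Fin N → ℕ) : Cube N where
  corner := fun i => Q.corner i + Q.side * (m i : ℝ) / 2 ^ k
  side := Q.side / 2 ^ k
  side_pos := div_pos Q.side_pos (by positivity)

/-- `R` is a dyadic subcube of `Q` (relative dyadic lattice `D(Q)`, including `Q` itself). -/
def IsDyadicSub (Q R : Cube N) : Prop :=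
  ∃ (k : ℕ) (m : Fin N → ℕ), (∀ i, m i < 2 ^ k) ∧ R = Q.subCube k m

end Cube

variable {N d : ℕ}

/-- The dyadic lattice, as a set of cubes. -/
def dyadicCubes (N : ℕ) : Set (Cube N) := {Q | Q.IsDyadic}

/-- All cubes in `ℝ^N`. -/
def allCubes (N : ℕ) : Set (Cube N) := Set.univ

/-- The average `⟨g⟩_Q = |Q|⁻¹ ∫_Q g`. -/
def avg (Q : Cube N) (g : (Fin N → ℝ) → ℝ) : ℝ :=
  (Q.vol)⁻¹ * ∫ y in Q.set, g y

/-- The entrywise average `⟨W⟩_Q` of a matrix-valued function. -/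
def matAvg (Q : Cube N) (W : (Fin N → ℝ) → Matrix (Fin d) (Fin d) ℝ) :
    Matrix (Fin d) (Fin d) ℝ :=
  Matrix.of fun i j => avg Q fun x => W x i j

/-- The positive semidefinite square root of a matrix (junk value `0` off psd matrices). -/
def msqrt (A : Matrix (Fin d) (Fin d) ℝ) : Matrix (Fin d) (Fin d) ℝ :=
  letI := Classical.dec A.PosSemidef
  if h : A.PosSemidef then
    (h.1.eigenvectorUnitary : Matrix (Fin d) (Fin d) ℝ) *
      Matrix.diagonal (fun i => Real.sqrt (h.1.eigenvalues i)) *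
      (star h.1.eigenvectorUnitary : Matrix (Fin d) (Fin d) ℝ)
  else 0

/-- The `ℓ² → ℓ²` operator norm of a `d × d` matrix. -/
def matOpNorm (A : Matrix (Fin d) (Fin d) ℝ) : ℝ :=
  sSup {t | ∃ v : Fin d → ℝ, vnorm v ≤ 1 ∧ t = vnorm (A.mulVec v)}

/-- A `d`-dimensional matrix weight: locally integrable, positive semidefinite values. -/
def IsMatrixWeight (W : (Fin N → ℝ) → Matrix (Fin d) (Fin d) ℝ) : Prop :=
  (∀ x, (W x).PosSemidef) ∧ ∀ i j, LocallyIntegrable (fun x => W x i j) volume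

/-- A scalar weight: nonnegative and locally integrable. -/
def IsScalarWeight (w : (Fin N → ℝ) → ℝ) : Prop :=
  (∀ x, 0 ≤ w x) ∧ LocallyIntegrable w volume

/-- The maximal function adapted to the cube `Q`:
`M_Q w(x) = sup {⟨w⟩_R : R ∈ D(Q), x ∈ R}` (and `0` off `Q`). -/
def MQ (Q : Cube N) (w : (Fin N → ℝ) → ℝ) (x : Fin N → ℝ) : ℝ :=
  sSup ({0} ∪ {t | ∃ R : Cube N, Q.IsDyadicSub R ∧ x ∈ R.set ∧ t = avg R w})

/-- Admissible `A∞` constants of a scalar weight, over a collection `𝒬` of cubes. -/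
def AinftyOn (𝒬 : Set (Cube N)) (w : (Fin N → ℝ) → ℝ) : Set ℝ :=
  {C | 0 ≤ C ∧ ∀ Q ∈ 𝒬, avg Q (MQ Q w) ≤ C * avg Q w}

/-- The `A∞` characteristic (best admissible constant) of a scalar weight. -/
def AinftyChar (𝒬 : Set (Cube N)) (w : (Fin N → ℝ) → ℝ) : ℝ := sInf (AinftyOn 𝒬 w)

/-- The scalar weight `w_e(x) = (W(x)e, e)` associated to a matrix weight and `e ∈ ℝ^d`. -/
def we (W : (Fin N → ℝ) → Matrix (Fin d) (Fin d) ℝ) (e : Fin d → ℝ) :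
    (Fin N → ℝ) → ℝ := fun x => e ⬝ᵥ (W x).mulVec e

/-- Admissible constants for the scalar `A∞` characteristic of a matrix weight. -/
def matAinftyScOn (𝒬 : Set (Cube N)) (W : (Fin N → ℝ) → Matrix (Fin d) (Fin d) ℝ) : Set ℝ :=
  {C | 0 ≤ C ∧ ∀ e : Fin d → ℝ, ∀ Q ∈ 𝒬, avg Q (MQ Q (we W e)) ≤ C * avg Q (we W e)}

/-- The scalar `A∞` characteristic `[W]^{sc}_{A∞} = sup_e [w_e]_{A∞}` of a matrix weight. -/
def matAinftyScChar (𝒬 : Set (Cube N)) (W : (Fin N → ℝ) → Matrix (Fin d) (Fin d) ℝ) : ℝ :=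
  sInf (matAinftyScOn 𝒬 W)

/-- Admissible constants for the two-weight matrix `A₂` characteristic
`[W,V]_{A₂} = sup_Q ‖⟨W⟩_Q^{1/2} ⟨V⟩_Q^{1/2}‖²`. -/
def A2pairOn (𝒬 : Set (Cube N)) (W V : (Fin N → ℝ) → Matrix (Fin d) (Fin d) ℝ) : Set ℝ :=
  {C | ∀ Q ∈ 𝒬, matOpNorm (msqrt (matAvg Q W) * msqrt (matAvg Q V)) ^ 2 ≤ C}

/-- The two-weight matrix `A₂` characteristic. -/
def A2pairChar (𝒬 : Set (Cube N)) (W V : (Fin N → ℝ) → Matrix (Fin d) (Fin d) ℝ) : ℝ :=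
  sInf (A2pairOn 𝒬 W V)

/-- Admissible constants for the scalar `A₂` characteristic `sup_Q ⟨w⟩_Q ⟨w⁻¹⟩_Q`. -/
def scalarA2On (𝒬 : Set (Cube N)) (w : (Fin N → ℝ) → ℝ) : Set ℝ :=
  {C | ∀ Q ∈ 𝒬, avg Q w * avg Q (fun x => (w x)⁻¹) ≤ C}

/-- The scalar `A₂` characteristic. -/
def scalarA2Char (𝒬 : Set (Cube N)) (w : (Fin N → ℝ) → ℝ) : ℝ := sInf (scalarA2On 𝒬 w)

/-- An `ω`-Calderón–Zygmund operator on `ℝ^N`: a linear operator, bounded on `L²`,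
with a kernel representation off the support, whose kernel satisfies the standard size
condition and the `ω`-smoothness condition, `ω` being a modulus of continuity. -/
structure CZO (N : ℕ) where
  op : ((Fin N → ℝ) → ℝ) →ₗ[ℝ] ((Fin N → ℝ) → ℝ)
  K : (Fin N → ℝ) → (Fin N → ℝ) → ℝ
  ω : ℝ → ℝ
  CK : ℝ
  normBound : ℝ
  bounded : ∀ f : (Fin N → ℝ) → ℝ, MemLp f 2 volume →
    MemLp (op f) 2 volume ∧
      eLpNorm (op f) 2 volume ≤ ENNReal.ofReal normBound * eLpNorm f 2 volume
  repr : ∀ f : (Fin N → ℝ) → ℝ, MemLp f 2 volume → ∀ x ∉ tsupport f,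
    op f x = ∫ y, K x y * f y
  size : ∀ x y : Fin N → ℝ, x ≠ y → |K x y| ≤ CK / vnorm (x - y) ^ N
  smooth : ∀ x x' y : Fin N → ℝ, x ≠ y → vnorm (x - x') ≤ vnorm (x - y) / 2 →
    |K x y - K x' y| + |K y x - K y x'| ≤
      ω (vnorm (x - x') / vnorm (x - y)) / vnorm (x - y) ^ N
  omega_zero : ω 0 = 0
  omega_mono : MonotoneOn ω (Set.Ici 0)
  omega_subadd : ∀ s t : ℝ, 0 ≤ s → 0 ≤ t → ω (s + t) ≤ ω s + ω t

/-- The Dini condition `∫₀¹ ω(t) dt/t < ∞` for a modulus of continuity. -/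
def Dini (ω : ℝ → ℝ) : Prop :=
  IntegrableOn (fun t => ω t / t) (Set.Ioc (0:ℝ) 1) volume

/-- Componentwise (i.e. `T ⊗ I_d`) action of a scalar operator on vector-valued functions. -/
def vecApply (T : ((Fin N → ℝ) → ℝ) → ((Fin N → ℝ) → ℝ))
    (f : (Fin N → ℝ) → Fin d → ℝ) : (Fin N → ℝ) → Fin d → ℝ :=
  fun x i => T (fun y => f y i) x

/-- `T` maps `L²` to `L²` with operator norm at most `M`. -/
def L2OpNormLe (T : ((Fin N → ℝ) → ℝ) → ((Fin N → ℝ) → ℝ)) (M : ℝ) : Prop :=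
  ∀ f : (Fin N → ℝ) → ℝ, MemLp f 2 volume →
    MemLp (T f) 2 volume ∧ eLpNorm (T f) 2 volume ≤ ENNReal.ofReal M * eLpNorm f 2 volume

/-- `T` is bounded on `L²`. -/
def L2Bounded (T : ((Fin N → ℝ) → ℝ) → ((Fin N → ℝ) → ℝ)) : Prop :=
  ∃ M : ℝ, L2OpNormLe T M

/-- The family of kernels of a (generalized big) Haar shift of complexity `r`:
`K_Q` is supported on `Q × Q`, bounded by `|Q|⁻¹`, constant on products of
`(r+1)`-st generation dyadic subcubes of `Q`, and vanishes for non-dyadic `Q`. -/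
structure HaarShiftKernel (N : ℕ) (r : ℕ) where
  K : Cube N → (Fin N → ℝ) → (Fin N → ℝ) → ℝ
  measK : ∀ Q : Cube N, Measurable (Function.uncurry (K Q))
  suppK : ∀ Q : Cube N, ∀ x y, K Q x y ≠ 0 → x ∈ Q.set ∧ y ∈ Q.set
  bddK : ∀ Q : Cube N, ∀ x y, |K Q x y| ≤ (Cube.vol Q)⁻¹
  constK : ∀ Q : Cube N, ∀ m m' : Fin N → ℕ,
    (∀ i, m i < 2 ^ (r + 1)) → (∀ i, m' i < 2 ^ (r + 1)) →
    ∀ x x' y y', x ∈ (Q.subCube (r + 1) m).set → x' ∈ (Q.subCube (r + 1) m).set →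
      y ∈ (Q.subCube (r + 1) m').set → y' ∈ (Q.subCube (r + 1) m').set →
      K Q x y = K Q x' y'
  dyadicK : ∀ Q : Cube N, ¬Q.IsDyadic → K Q = 0

/-- The operator `𝕊 = Σ_{Q ∈ D} T_Q` associated to a family of Haar shift kernels. -/
def hsApply {r : ℕ} (S : HaarShiftKernel N r) (f : (Fin N → ℝ) → ℝ) : (Fin N → ℝ) → ℝ :=
  fun x => ∑' Q : Cube N, ∫ y, S.K Q x y * f y

/-- The cancellation conditions `T_Q 1_Q = 0`, `T_Q^* 1_Q = 0` making a generalized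
big Haar shift a big Haar shift. -/
def IsBigShift {r : ℕ} (S : HaarShiftKernel N r) : Prop :=
  (∀ Q : Cube N, ∀ x, (∫ y, S.K Q x y) = 0) ∧ (∀ Q : Cube N, ∀ y, (∫ x, S.K Q x y) = 0)

/-- The sublattice `D̃ = ∪_j D_{k+(r+1)j}` of the dyadic lattice. -/
def Dtilde (N r k : ℕ) : Set (Cube N) :=
  {Q | Q.IsDyadic ∧ ∃ j : ℤ, Q.side = (2:ℝ) ^ (-((k : ℤ) + (r + 1) * j))}

/-- The Haar shift is `r`-separated with lattice parameter `k`: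
`T_Q ≠ 0` only for `Q ∈ D̃`. -/
def SeparatedKernel {r : ℕ} (S : HaarShiftKernel N r) (k : ℕ) : Prop :=
  ∀ Q : Cube N, S.K Q ≠ 0 → Q ∈ Dtilde N r k

/-- The martingale difference `Δ_R b = Σ_{R' child of R} ⟨b⟩_{R'} 1_{R'} - ⟨b⟩_R 1_R`. -/
def haarDelta (R : Cube N) (b : (Fin N → ℝ) → ℝ) (x : Fin N → ℝ) : ℝ :=
  (∑ m : Fin N → Fin 2, Set.indicator (R.subCube 1 fun i => (m i : ℕ)).set
      (fun _ => avg (R.subCube 1 fun i => (m i : ℕ)) b) x)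
    - Set.indicator R.set (fun _ => avg R b) x

/-- The paraproduct of order `r` with symbol `b`:
`Π_b^r f = Σ_{Q ∈ D} ⟨f⟩_Q Σ_{R ∈ ch^r Q} Δ_R b`. -/
def paraApply (r : ℕ) (b f : (Fin N → ℝ) → ℝ) : (Fin N → ℝ) → ℝ :=
  fun x => ∑' Q : dyadicCubes N,
    avg Q.val f * ∑ m : Fin N → Fin (2 ^ r), haarDelta (Q.val.subCube r fun i => (m i : ℕ)) b x

/-- The paraproduct `Π_b^r` is `r`-separated with lattice parameter `k`. -/
def SeparatedPara (r : ℕ) (b : (Fin N → ℝ) → ℝ) (k : ℕ) : Prop :=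
  ∀ Q : Cube N, Q.IsDyadic →
    (∃ x, (∑ m : Fin N → Fin (2 ^ r), haarDelta (Q.subCube r fun i => (m i : ℕ)) b x) ≠ 0) →
    Q ∈ Dtilde N r k

/-- `T` is a big Haar shift of complexity `r`, or a paraproduct of order `r`
with `L²` norm at most `2^{-Nr/2}`. -/
def IsShiftOrParaproduct (N r : ℕ) (T : ((Fin N → ℝ) → ℝ) → ((Fin N → ℝ) → ℝ)) : Prop :=
  (∃ S : HaarShiftKernel N r, IsBigShift S ∧ L2Bounded (hsApply S) ∧ T = hsApply S) ∨
  (∃ b : (Fin N → ℝ) → ℝ, LocallyIntegrable b volume ∧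
      L2OpNormLe (paraApply r b) (Real.sqrt ((2:ℝ) ^ (N * r)))⁻¹ ∧ T = paraApply r b)

/-- `T` is an `r`-separated big Haar shift of complexity `r`, or an `r`-separated
paraproduct of order `r` with `L²` norm at most `2^{-Nr/2}`; `k ≤ r` is the lattice
parameter of the separation sublattice `D̃`. -/
def IsSeparatedShiftOrParaproduct (N r k : ℕ)
    (T : ((Fin N → ℝ) → ℝ) → ((Fin N → ℝ) → ℝ)) : Prop :=
  k ≤ r ∧
  ((∃ S : HaarShiftKernel N r, IsBigShift S ∧ L2Bounded (hsApply S) ∧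
      SeparatedKernel S k ∧ T = hsApply S) ∨
   (∃ b : (Fin N → ℝ) → ℝ, LocallyIntegrable b volume ∧
      L2OpNormLe (paraApply r b) (Real.sqrt ((2:ℝ) ^ (N * r)))⁻¹ ∧
      SeparatedPara r b k ∧ T = paraApply r b))

/-- The convex-body average `⟨⟨f⟩⟩_Q = {⟨φ f⟩_Q : ‖φ‖_∞ ≤ 1}`. -/
def cbAvg (Q : Cube N) (f : (Fin N → ℝ) → Fin d → ℝ) : Set (Fin d → ℝ) :=
  {v | ∃ φ : (Fin N → ℝ) → ℝ, Measurable φ ∧ (∀ x, |φ x| ≤ 1) ∧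
        v = fun i => avg Q fun x => φ x * f x i}

/-- A weakly `η`-sparse family of cubes: there are pairwise disjoint measurable
subsets `E_Q ⊆ Q` with `|E_Q| ≥ η |Q|`. -/
def WeaklySparse (S : Set (Cube N)) (η : ℝ) : Prop :=
  ∃ E : Cube N → Set (Fin N → ℝ),
    (∀ Q ∈ S, E Q ⊆ Q.set ∧ MeasurableSet (E Q) ∧ ENNReal.ofReal (η * Q.vol) ≤ volume (E Q)) ∧
    S.PairwiseDisjoint E

/-- The value at `x` of the convex-body sparse operator
`𝐋_S f = Σ_{Q ∈ S} ⟨⟨f⟩⟩_Q 1_Q` (an infinite Minkowski sum): all convergent sums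
`Σ_Q g(Q)` with `g(Q) ∈ ⟨⟨f⟩⟩_Q` whenever `Q ∈ S` contains `x`, and `g(Q) = 0` otherwise. -/
def sparseBody (S : Set (Cube N)) (f : (Fin N → ℝ) → Fin d → ℝ) (x : Fin N → ℝ) :
    Set (Fin d → ℝ) :=
  {v | ∃ g : Cube N → Fin d → ℝ,
        (∀ Q : Cube N, Q ∈ S ∧ x ∈ Q.set → g Q ∈ cbAvg Q f) ∧
        (∀ Q : Cube N, ¬(Q ∈ S ∧ x ∈ Q.set) → g Q = 0) ∧ HasSum g v}

/-- The `S`-children of `Q`: maximal cubes of `S` strictly contained in `Q`. -/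
def sChildren (S : Set (Cube N)) (Q : Cube N) : Set (Cube N) :=
  {R | R ∈ S ∧ R.set ⊂ Q.set ∧ ¬∃ R' ∈ S, R.set ⊂ R'.set ∧ R'.set ⊂ Q.set}

/-- A classical `ε`-sparse family of dyadic cubes: `Σ_{R ∈ ch_S(Q)} |R| ≤ ε |Q|`. -/
def EpsSparse (S : Set (Cube N)) (ε : ℝ) : Prop :=
  (∀ Q ∈ S, Q.IsDyadic) ∧
  ∀ Q ∈ S, ∀ F : Finset (Cube N), ↑F ⊆ sChildren S Q → ∑ R ∈ F, R.vol ≤ ε * Q.vol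

/-- A dyadic `λ`-Carleson family: `Σ_{R ∈ S, R ⊆ Q} |R| ≤ λ |Q|` for all `Q ∈ S`. -/
def DyadicCarleson (S : Set (Cube N)) (lam : ℝ) : Prop :=
  (∀ Q ∈ S, Q.IsDyadic) ∧
  ∀ Q ∈ S, ∀ F : Finset (Cube N), (↑F ⊆ {R | R ∈ S ∧ R.set ⊆ Q.set}) →
    ∑ R ∈ F, R.vol ≤ lam * Q.vol

/-- A simple sparse family: every cube of `S` has at most one `S`-child. -/
def SimpleSparse (S : Set (Cube N)) : Prop :=
  (∀ Q ∈ S, Q.IsDyadic) ∧ ∀ Q ∈ S, (sChildren S Q).Subsingleton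

end CBD

end
namespace CBD

section Aux


lemma dot_sum {d : ℕ} {ι : Type*} [Fintype ι] (e : Fin d → ℝ) (f : ι → Fin d → ℝ) :
    e ⬝ᵥ (∑ j, f j) = ∑ j, e ⬝ᵥ f j := by
  simp only [dotProduct, Finset.sum_apply, Finset.mul_sum]
  rw [Finset.sum_comm]

/-- scaled element membership -/
lemma smul_mem_of_abs_le {d : ℕ} {K : Set (Fin d → ℝ)}
    (hsymm : ∀ u ∈ K, -u ∈ K) (hconv : Convex ℝ K)
    {u : Fin d → ℝ} (hu : u ∈ K) {c : ℝ} (hc : |c| ≤ 1) : c • u ∈ K := by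
  have h1 : (0:ℝ) ≤ (1 + c) / 2 := by
    have := neg_le_of_abs_le hc; linarith
  have h2 : (0:ℝ) ≤ (1 - c) / 2 := by
    have := le_of_abs_le hc; linarith
  have := hconv hu (hsymm u hu) h1 h2 (by ring)
  have heq : ((1 + c) / 2) • u + ((1 - c) / 2) • (-u) = c • u := by
    rw [smul_neg, ← sub_eq_add_neg, ← sub_smul]
    congr 1
    ring
  rwa [heq] at this

lemma combo_mem {d : ℕ} {K : Set (Fin d → ℝ)} (h0 : (0 : Fin d → ℝ) ∈ K)
    (hsymm : ∀ u ∈ K, -u ∈ K) (hconv : Convex ℝ K)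
    {ι : Type*} [Fintype ι] (u : ι → Fin d → ℝ) (t : ι → ℝ)
    (hu : ∀ j, u j ∈ K) (ht : ∑ j, |t j| ≤ 1) : (∑ j, t j • u j) ∈ K := by
  classical
  set a : Option ι → ℝ := fun o => o.elim (1 - ∑ j, |t j|) (fun j => |t j|) with ha
  set p : Option ι → (Fin d → ℝ) := fun o =>
    o.elim 0 (fun j => (if t j < 0 then (-1:ℝ) else 1) • u j) with hp
  have key : ∑ o : Option ι, a o • p o ∈ K := by
    apply hconv.sum_mem
    · rintro (_|j) _
      · simp only [ha, Option.elim]; simpa using ht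
      · simp [ha, abs_nonneg]
    · rw [Fintype.sum_option]; simp [ha]
    · rintro (_|j) _
      · simpa [hp] using h0
      · show ((if t j < 0 then (-1:ℝ) else 1) • u j) ∈ K
        split
        · exact smul_mem_of_abs_le hsymm hconv (hu j) (by simp)
        · exact smul_mem_of_abs_le hsymm hconv (hu j) (by simp)
  rw [Fintype.sum_option] at key
  simp only [ha, hp, Option.elim] at key
  rw [smul_zero, zero_add] at key
  convert key using 2 with j
  rw [smul_smul]
  congr 1
  split
  · next h => rw [abs_of_neg h]; ring
  · next h => rw [abs_of_nonneg (not_lt.1 h)]; ring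

lemma det_abs_bound {d : ℕ} (M : Matrix (Fin d) (Fin d) ℝ) {R : ℝ} (hR : 0 ≤ R)
    (h : ∀ i j, |M i j| ≤ R) : |M.det| ≤ (d.factorial : ℝ) * R ^ d := by
  classical
  rw [Matrix.det_apply]
  calc |∑ σ : Equiv.Perm (Fin d), Equiv.Perm.sign σ • ∏ i, M (σ i) i|
      ≤ ∑ σ : Equiv.Perm (Fin d), |Equiv.Perm.sign σ • ∏ i, M (σ i) i| :=
        Finset.abs_sum_le_sum_abs _ _
    _ ≤ ∑ _σ : Equiv.Perm (Fin d), R ^ d := by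
        apply Finset.sum_le_sum
        intro σ _
        have habs : |Equiv.Perm.sign σ • ∏ i, M (σ i) i| = |∏ i, M (σ i) i| := by
          rcases Int.units_eq_one_or (Equiv.Perm.sign σ) with h1 | h1 <;>
            rw [h1] <;> simp [Units.smul_def]
        rw [habs, Finset.abs_prod]
        calc ∏ i, |M (σ i) i| ≤ ∏ _i : Fin d, R :=
              Finset.prod_le_prod (fun i _ => abs_nonneg _) (fun i _ => h _ _)
          _ = R ^ d := by simp
    _ = (d.factorial : ℝ) * R ^ d := by
        rw [Finset.sum_const]
        simp [Fintype.card_perm]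

/-- existence of a nonzero dot-orthogonal vector to a proper subspace -/
lemma exists_dot_orthogonal {d : ℕ} (W : Submodule ℝ (Fin d → ℝ)) (hW : W ≠ ⊤) :
    ∃ e : Fin d → ℝ, e ≠ 0 ∧ ∀ u ∈ W, e ⬝ᵥ u = 0 := by
  classical
  set k := Module.finrank ℝ W with hk
  have hklt : k < d := by
    have := Submodule.finrank_lt (K := ℝ) (V := Fin d → ℝ) hW
    rwa [Module.finrank_pi, Fintype.card_fin] at this
  obtain b := Module.finBasis ℝ W
  set L : (Fin d → ℝ) →ₗ[ℝ] (Fin k → ℝ) :=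
    Matrix.mulVecLin (Matrix.of fun j i => ((b j : W) : Fin d → ℝ) i) with hL
  have hker : LinearMap.ker L ≠ ⊥ := by
    intro hbot
    have hrr := LinearMap.finrank_range_add_finrank_ker L
    rw [hbot, finrank_bot, add_zero, Module.finrank_pi, Fintype.card_fin] at hrr
    have hle : Module.finrank ℝ ↥(LinearMap.range L) ≤ k := by
      have := Submodule.finrank_le (LinearMap.range L)
      rwa [Module.finrank_pi, Fintype.card_fin] at this
    omega
  obtain ⟨e, heker, hne⟩ := (Submodule.ne_bot_iff _).1 hker
  refine ⟨e, hne, ?_⟩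
  have hbz : ∀ j : Fin k, e ⬝ᵥ ((b j : W) : Fin d → ℝ) = 0 := by
    intro j
    have h0 := congrFun (LinearMap.mem_ker.1 heker) j
    rw [hL] at h0
    simp only [Matrix.mulVecLin_apply, Matrix.mulVec, dotProduct,
      Matrix.of_apply, Pi.zero_apply] at h0
    rw [dotProduct, ← h0]
    exact Finset.sum_congr rfl fun i _ => mul_comm _ _
  intro u hu
  have hu2 : (∑ j, (b.repr ⟨u, hu⟩) j • ((b j : W) : Fin d → ℝ)) = u := by
    have := congrArg Subtype.val (b.sum_repr ⟨u, hu⟩)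
    rwa [Submodule.coe_sum] at this
  rw [← hu2, dot_sum]
  simp only [dotProduct_smul, hbz, smul_eq_mul, mul_zero]
  simp


lemma sum_dot {d : ℕ} {ι : Type*} [Fintype ι] (e : Fin d → ℝ) (f : ι → Fin d → ℝ) :
    (∑ j, f j) ⬝ᵥ e = ∑ j, f j ⬝ᵥ e := by
  simp only [dotProduct, Finset.sum_apply, Finset.sum_mul]
  rw [Finset.sum_comm]

/-- The core convex-geometry lemma. -/

lemma core_lemma {d : ℕ} (K : Set (Fin d → ℝ)) (h : (Fin d → ℝ) → ℝ)
    (hK0 : (0 : Fin d → ℝ) ∈ K) (hKsymm : ∀ u ∈ K, -u ∈ K) (hKconv : Convex ℝ K)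
    (hK4 : ∀ e, ∃ u ∈ K, h e = e ⬝ᵥ u)
    (hK5 : ∀ e, ∀ u ∈ K, |e ⬝ᵥ u| ≤ h e) :
    ∃ E : Fin (2 * d) → (Fin d → ℝ),
      ∀ A : ℝ, 0 < A → ∀ v : Fin d → ℝ,
        (∀ j, |E j ⬝ᵥ v| ≤ A * h (E j)) → v ∈ (((2 * d : ℕ) : ℝ) * A) • K := by
  classical
  -- h is nonnegative
  have hnn : ∀ e, 0 ≤ h e := by
    intro e
    have := hK5 e 0 hK0
    simpa using this
  -- the null subspace V
  set V : Submodule ℝ (Fin d → ℝ) :=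
    { carrier := {e | h e = 0}
      zero_mem' := by
        obtain ⟨u, _, hu⟩ := hK4 0
        simp only [Set.mem_setOf_eq, hu, zero_dotProduct]
      add_mem' := by
        intro a b haa hbb
        simp only [Set.mem_setOf_eq] at *
        obtain ⟨u, huK, hu⟩ := hK4 (a + b)
        have h1 : |a ⬝ᵥ u| ≤ 0 := haa ▸ hK5 a u huK
        have h2 : |b ⬝ᵥ u| ≤ 0 := hbb ▸ hK5 b u huK
        have : a ⬝ᵥ u = 0 := abs_nonneg _ |>.antisymm h1 |>.symm ▸ (abs_eq_zero.1 (le_antisymm h1 (abs_nonneg _)))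
        have hb0 : b ⬝ᵥ u = 0 := abs_eq_zero.1 (le_antisymm h2 (abs_nonneg _))
        rw [hu, add_dotProduct, this, hb0, add_zero]
      smul_mem' := by
        intro c a haa
        simp only [Set.mem_setOf_eq] at *
        obtain ⟨u, huK, hu⟩ := hK4 (c • a)
        have h1 : |a ⬝ᵥ u| ≤ 0 := haa ▸ hK5 a u huK
        have ha0 : a ⬝ᵥ u = 0 := abs_eq_zero.1 (le_antisymm h1 (abs_nonneg _))
        rw [hu, smul_dotProduct, ha0, smul_zero] } with hV
  have hmemV : ∀ e, e ∈ V ↔ h e = 0 := fun e => Iff.rfl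
  -- K is dot-orthogonal to V
  have hKV : ∀ z ∈ V, ∀ u ∈ K, z ⬝ᵥ u = 0 := by
    intro z hz u hu
    have := hK5 z u hu
    rw [(hmemV z).1 hz] at this
    exact abs_eq_zero.1 (le_antisymm this (abs_nonneg _))
  -- the fattened body P
  set P : Set (Fin d → ℝ) := {w | ∃ u ∈ K, ∃ z ∈ V, ‖z‖ ≤ 1 ∧ w = u + z} with hP
  have hKP : ∀ u ∈ K, u ∈ P := fun u hu => ⟨u, hu, 0, V.zero_mem, by simp⟩
  have h0P : (0 : Fin d → ℝ) ∈ P := hKP 0 hK0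
  -- entrywise bound on P
  set R : ℝ := 1 + ∑ i, h (Pi.single i 1) with hR
  have hRpos : 0 < R := by
    have : 0 ≤ ∑ i, h (Pi.single i 1) :=
      Finset.sum_nonneg fun i _ => hnn _
    linarith
  have hPbnd : ∀ w ∈ P, ∀ i, |w i| ≤ R := by
    rintro w ⟨u, huK, z, hzV, hz1, rfl⟩ i
    have h1 : |u i| ≤ h (Pi.single i 1) := by
      have := hK5 (Pi.single i 1) u huK
      rwa [single_dotProduct, one_mul] at this
    have h2 : |z i| ≤ 1 := le_trans (by simpa using norm_le_pi_norm z i) hz1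
    have h3 : h (Pi.single i 1) ≤ ∑ i', h (Pi.single i' 1) :=
      Finset.single_le_sum (f := fun i' => h (Pi.single i' 1)) (fun i' _ => hnn _)
        (Finset.mem_univ i)
    calc |(u + z) i| ≤ |u i| + |z i| := abs_add_le _ _
      _ ≤ R := by simp only [hR]; linarith
  -- the set of absolute determinants of P-columned matrices
  set DS : Set ℝ :=
    (fun w : Fin d → (Fin d → ℝ) => |(Matrix.of fun i j => w j i).det|) ''
      {w | ∀ j, w j ∈ P} with hDS
  have hDSne : DS.Nonempty := ⟨_, ⟨fun _ => 0, fun _ => h0P, rfl⟩⟩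
  have hDSbdd : BddAbove DS := by
    refine ⟨(d.factorial : ℝ) * R ^ d, ?_⟩
    rintro x ⟨w, hw, rfl⟩
    exact det_abs_bound _ hRpos.le fun i j => hPbnd _ (hw j) i
  -- span P = ⊤
  have hspan : Submodule.span ℝ P = ⊤ := by
    by_contra hne
    obtain ⟨e, hene, he⟩ := exists_dot_orthogonal _ hne
    have heK : ∀ u ∈ K, e ⬝ᵥ u = 0 := fun u hu =>
      he u (Submodule.subset_span (hKP u hu))
    have heV : e ∈ V := by
      rw [hmemV]
      obtain ⟨u, huK, hu⟩ := hK4 e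
      rw [hu, heK u huK]
    have hz : (‖e‖⁻¹ • e) ∈ P :=
      ⟨0, hK0, ‖e‖⁻¹ • e, V.smul_mem _ heV, by
        rw [norm_smul]
        rcases eq_or_ne ‖e‖ 0 with h0 | h0
        · simp [h0]
        · rw [norm_inv, norm_norm]
          rw [inv_mul_cancel₀ h0]
        , by simp⟩
    have := he _ (Submodule.subset_span hz)
    rw [dotProduct_smul] at this
    have hee : e ⬝ᵥ e = 0 := by
      have hn : ‖e‖ ≠ 0 := norm_ne_zero_iff.2 hene
      field_simp at this
      exact (smul_eq_zero.1 this).resolve_left (by simp [hn])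
    exact hene (dotProduct_self_eq_zero.1 hee)
  -- dimension zero case
  rcases Nat.eq_zero_or_pos d with hd0 | hd
  · subst hd0
    refine ⟨fun _ => 0, ?_⟩
    intro A hA v _
    have hv0 : v = 0 := funext fun i => i.elim0
    have : (((2 * 0 : ℕ) : ℝ) * A) = 0 := by norm_num
    rw [hv0, this, Set.zero_smul_set ⟨0, hK0⟩]
    exact Set.zero_mem_zero
  -- a linearly independent P-columned family
  obtain ⟨bset, hbsub, hbspan, hbli⟩ := exists_linearIndependent ℝ P
  rw [hspan] at hbspan
  have hBfin : FiniteDimensional ℝ (Fin d → ℝ) := inferInstance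
  set B0 : Module.Basis ↥bset ℝ (Fin d → ℝ) :=
    Module.Basis.mk hbli (by rw [Subtype.range_coe, hbspan]) with hB0
  set eqv : ↥bset ≃ Fin d := B0.indexEquiv (Pi.basisFun ℝ (Fin d)) with heqv
  set w0 : Fin d → (Fin d → ℝ) := fun j => ((eqv.symm j : ↥bset) : Fin d → ℝ) with hw0
  have hw0P : ∀ j, w0 j ∈ P := fun j => hbsub (eqv.symm j).2
  have hw0det : (Matrix.of fun i j => w0 j i).det ≠ 0 := by
    have hli : LinearIndependent ℝ w0 := hbli.comp _ (eqv.symm.injective)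
    have hsp : Submodule.span ℝ (Set.range w0) = ⊤ := by
      have : Set.range w0 = bset := by
        ext x
        constructor
        · rintro ⟨j, rfl⟩
          exact (eqv.symm j).2
        · intro hx
          exact ⟨eqv ⟨x, hx⟩, by simp [hw0]⟩
      rw [this, hbspan]
    have := (Module.Basis.is_basis_iff_det (Pi.basisFun ℝ (Fin d))).1 ⟨hli, hsp⟩
    rw [Module.Basis.det_apply] at this
    have hmat : (Pi.basisFun ℝ (Fin d)).toMatrix w0 = Matrix.of fun i j => w0 j i := by
      ext i j
      rw [Module.Basis.toMatrix_apply, Pi.basisFun_repr, Matrix.of_apply]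
    rw [hmat] at this
    exact this.ne_zero
  set Msup : ℝ := sSup DS with hMsup
  have hMpos : 0 < Msup := by
    have hmem : |(Matrix.of fun i j => w0 j i).det| ∈ DS := ⟨w0, hw0P, rfl⟩
    exact lt_of_lt_of_le (abs_pos.2 hw0det) (le_csSup hDSbdd hmem)
  obtain ⟨x, ⟨w, hwP, rfl⟩, hdethalf⟩ := exists_lt_of_lt_csSup hDSne (half_lt_self hMpos)
  set W' : Matrix (Fin d) (Fin d) ℝ := Matrix.of fun i j => w j i with hW'
  have hdethalf2 : Msup / 2 < |W'.det| := hdethalf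
  have hdet : W'.det ≠ 0 := by
    intro h0
    rw [h0] at hdethalf2
    simp at hdethalf2
    linarith [half_pos hMpos]
  set L : (Fin d → ℝ) →ₗ[ℝ] (Fin d → ℝ) := (W'.det)⁻¹ • (Matrix.cramer W') with hLdef
  have hrepr : ∀ v : Fin d → ℝ, v = ∑ j, L v j • w j := by
    intro v
    have h1 : W'.mulVec (Matrix.cramer W' v) = W'.det • v := Matrix.mulVec_cramer W' v
    have h2 : W'.mulVec (L v) = v := by
      rw [hLdef]
      simp only [LinearMap.smul_apply]
      rw [Matrix.mulVec_smul, h1, smul_smul, inv_mul_cancel₀ hdet, one_smul]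
    have h3 : W'.mulVec (L v) = ∑ j, L v j • w j := by
      funext i
      rw [Finset.sum_apply]
      simp only [Matrix.mulVec, dotProduct, hW', Matrix.of_apply, Pi.smul_apply,
        smul_eq_mul]
      exact Finset.sum_congr rfl fun j _ => mul_comm _ _
    exact (h2.symm.trans h3)
  have hLbnd : ∀ u ∈ P, ∀ j, |L u j| ≤ 2 := by
    intro u hu j
    have hcr : L u j = (W'.det)⁻¹ * (W'.updateCol j u).det := by
      rw [hLdef]
      simp only [LinearMap.smul_apply, Pi.smul_apply, smul_eq_mul]
      rw [Matrix.cramer_apply]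
    have hupd : (W'.updateCol j u).det = (Matrix.of fun i k =>
        (fun k' => if k' = j then u else w k') k i).det := by
      congr 1
      ext i k
      rw [Matrix.updateCol_apply, Matrix.of_apply]
      by_cases hkj : k = j <;> simp [hkj, hW']
    have hmem : |(W'.updateCol j u).det| ∈ DS := by
      rw [hupd]
      refine ⟨_, fun k => ?_, rfl⟩
      by_cases hkj : k = j <;> simp only [hkj, if_pos, if_neg] <;> simp [hkj, hu, hwP k]
    have hle : |(W'.updateCol j u).det| ≤ Msup := le_csSup hDSbdd hmem
    rw [hcr, abs_mul, abs_inv]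
    have h1 : |W'.det|⁻¹ ≤ (Msup / 2)⁻¹ :=
      inv_anti₀ (half_pos hMpos) hdethalf2.le
    calc |W'.det|⁻¹ * |(W'.updateCol j u).det| ≤ (Msup / 2)⁻¹ * Msup := by
          apply mul_le_mul h1 hle (abs_nonneg _)
          positivity
      _ = 2 := by field_simp
  -- dual directions
  set Emat : Matrix (Fin d) (Fin d) ℝ := LinearMap.toMatrix' L with hEmat
  have hEdot : ∀ (v : Fin d → ℝ) (j : Fin d), Emat j ⬝ᵥ v = L v j := by
    intro v j
    have : Matrix.toLin' Emat v = L v := by rw [hEmat, Matrix.toLin'_toMatrix']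
    rw [← congrFun this j, Matrix.toLin'_apply]
    rfl
  -- basis of V
  set m : ℕ := Module.finrank ℝ V with hm
  have hmd : m ≤ d := by
    have := Submodule.finrank_le V
    rwa [Module.finrank_pi, Fintype.card_fin] at this
  set bV : Module.Basis (Fin m) ℝ V := Module.finBasis ℝ V with hbV
  -- the directions
  set E : Fin (2 * d) → (Fin d → ℝ) := fun j =>
    Fin.addCases (motive := fun _ => Fin d → ℝ) (fun j0 : Fin d => Emat j0)
      (fun j0 : Fin d => if hj : (j0 : ℕ) < m then ((bV ⟨(j0 : ℕ), hj⟩ : V) : Fin d → ℝ) else 0)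
      (Fin.cast (two_mul d) j) with hE
  have hEleft : ∀ j : Fin d, E ((Fin.castAdd d j).cast (two_mul d).symm) = Emat j := by
    intro j
    show Fin.addCases (motive := fun _ => Fin d → ℝ) (fun j0 : Fin d => Emat j0)
      (fun j0 : Fin d => if hj : (j0 : ℕ) < m then ((bV ⟨(j0 : ℕ), hj⟩ : V) : Fin d → ℝ) else 0)
      (Fin.cast (two_mul d) ((Fin.castAdd d j).cast (two_mul d).symm)) = Emat j
    have hcast : Fin.cast (two_mul d) ((Fin.castAdd d j).cast (two_mul d).symm) =
        Fin.castAdd d j := rfl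
    rw [hcast, Fin.addCases_left]
  have hEright : ∀ j : Fin d, E ((Fin.natAdd d j).cast (two_mul d).symm) =
      (if hj : (j : ℕ) < m then ((bV ⟨(j : ℕ), hj⟩ : V) : Fin d → ℝ) else 0) := by
    intro j
    show Fin.addCases (motive := fun _ => Fin d → ℝ) (fun j0 : Fin d => Emat j0)
      (fun j0 : Fin d => if hj : (j0 : ℕ) < m then ((bV ⟨(j0 : ℕ), hj⟩ : V) : Fin d → ℝ) else 0)
      (Fin.cast (two_mul d) ((Fin.natAdd d j).cast (two_mul d).symm)) = _
    have hcast : Fin.cast (two_mul d) ((Fin.natAdd d j).cast (two_mul d).symm) =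
        Fin.natAdd d j := rfl
    rw [hcast, Fin.addCases_right]
  refine ⟨E, ?_⟩
  intro A hA v hv
  -- bounds in the dual directions
  have hcb : ∀ j : Fin d, |L v j| ≤ 2 * A := by
    intro j
    have hb := hv ((Fin.castAdd d j).cast (two_mul d).symm)
    rw [hEleft j, hEdot] at hb
    have hh2 : h (Emat j) ≤ 2 := by
      obtain ⟨u, huK, hu⟩ := hK4 (Emat j)
      rw [hu, hEdot]
      exact le_trans (le_abs_self _) (hLbnd u (hKP u huK) j)
    calc |L v j| ≤ A * h (Emat j) := hb
      _ ≤ A * 2 := by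
        apply mul_le_mul_of_nonneg_left hh2 hA.le
      _ = 2 * A := by ring
  -- v is dot-orthogonal to V
  have hvV : ∀ z ∈ V, z ⬝ᵥ v = 0 := by
    have hbasis : ∀ l : Fin m, ((bV l : V) : Fin d → ℝ) ⬝ᵥ v = 0 := by
      intro l
      have hlm : (l : ℕ) < m := l.2
      have hld : (l : ℕ) < d := lt_of_lt_of_le hlm hmd
      set l' : Fin d := ⟨(l : ℕ), hld⟩ with hl'
      have hb := hv ((Fin.natAdd d l').cast (two_mul d).symm)
      rw [hEright l'] at hb
      rw [dif_pos (show ((l' : ℕ) < m) from hlm)] at hb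
      have hll : (⟨(l' : ℕ), hlm⟩ : Fin m) = l := Fin.ext rfl
      rw [hll] at hb
      have hz : h ((bV l : V) : Fin d → ℝ) = 0 := (hmemV _).1 (bV l).2
      rw [hz, mul_zero] at hb
      exact abs_eq_zero.1 (le_antisymm hb (abs_nonneg _))
    intro z hz
    have hz2 : (∑ l, (bV.repr ⟨z, hz⟩) l • ((bV l : V) : Fin d → ℝ)) = z := by
      have := congrArg Subtype.val (bV.sum_repr ⟨z, hz⟩)
      rwa [Submodule.coe_sum] at this
    calc z ⬝ᵥ v = (∑ l, (bV.repr ⟨z, hz⟩) l • ((bV l : V) : Fin d → ℝ)) ⬝ᵥ v := by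
          rw [hz2]
      _ = 0 := by
          rw [sum_dot]
          apply Finset.sum_eq_zero
          intro l _
          rw [smul_dotProduct, hbasis l, smul_zero]
  -- decompose the columns
  choose uu huuK zz hzzV hzz1 hwdec using hwP
  set c : Fin d → ℝ := fun j => L v j with hc
  have hvdec : v = (∑ j, c j • uu j) + (∑ j, c j • zz j) := by
    rw [← Finset.sum_add_distrib]
    calc v = ∑ j, L v j • w j := hrepr v
      _ = ∑ j, (c j • uu j + c j • zz j) := by
          apply Finset.sum_congr rfl
          intro j _
          rw [hwdec j, smul_add]
  set xx : Fin d → ℝ := ∑ j, c j • uu j with hxx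
  set yy : Fin d → ℝ := ∑ j, c j • zz j with hyy
  have hyyV : yy ∈ V := by
    rw [hyy]
    exact Submodule.sum_mem V fun j _ => V.smul_mem _ (hzzV j)
  have hyy0 : yy = 0 := by
    have h1 : yy ⬝ᵥ v = 0 := hvV yy hyyV
    have h2 : yy ⬝ᵥ xx = 0 := by
      rw [hxx, dot_sum]
      apply Finset.sum_eq_zero
      intro j _
      rw [dotProduct_smul, hKV yy hyyV (uu j) (huuK j), smul_zero]
    have h3 : yy ⬝ᵥ yy = 0 := by
      have : yy ⬝ᵥ (xx + yy) = 0 := by rw [← hvdec]; exact h1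
      rw [dotProduct_add, h2, zero_add] at this
      exact this
    exact dotProduct_self_eq_zero.1 h3
  have hvx : v = xx := by rw [hvdec, hyy0, add_zero]
  -- conclude membership
  set c' : ℝ := ((2 * d : ℕ) : ℝ) * A with hc'
  have hc'pos : 0 < c' := by
    rw [hc']
    have : (0:ℝ) < ((2 * d : ℕ) : ℝ) := by
      have : 0 < 2 * d := by omega
      exact_mod_cast this
    positivity
  refine ⟨∑ j, (c j / c') • uu j, ?_, ?_⟩
  · apply combo_mem hK0 hKsymm hKconv
    · exact huuK
    · calc ∑ j, |c j / c'| = ∑ j, |c j| / c' := by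
            apply Finset.sum_congr rfl
            intro j _
            rw [abs_div, abs_of_pos hc'pos]
        _ ≤ ∑ _j : Fin d, (2 * A) / c' := by
            apply Finset.sum_le_sum
            intro j _
            gcongr
            exact hcb j
        _ ≤ 1 := by
            rw [Finset.sum_const, Finset.card_univ, Fintype.card_fin, nsmul_eq_mul]
            have hc'' : c' = 2 * (d : ℝ) * A := by rw [hc']; push_cast; ring
            rw [hc'']
            have hA0 : A ≠ 0 := ne_of_gt hA
            have hd0 : (d : ℝ) ≠ 0 := Nat.cast_ne_zero.2 (by omega)
            apply le_of_eq
            field_simp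
  · show c' • (∑ j, (c j / c') • uu j) = v
    rw [Finset.smul_sum, hvx]
    apply Finset.sum_congr rfl
    intro j _
    rw [smul_smul, mul_div_cancel₀ _ (ne_of_gt hc'pos)]


section CubeGeom
variable {N : ℕ}




lemma Cube.corner_mem_set (Q : Cube N) : Q.corner ∈ Q.set :=
  fun i => ⟨le_refl _, by linarith [Q.side_pos]⟩

lemma Cube.ext' {Q R : Cube N} (h1 : Q.corner = R.corner) (h2 : Q.side = R.side) : Q = R := by
  cases Q; cases R; simp_all

lemma side_le_of_subset (hN : 0 < N) {Q R : Cube N} (h : Q.set ⊆ R.set) :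
    Q.side ≤ R.side := by
  by_contra hlt
  push_neg at hlt
  set i0 : Fin N := ⟨0, hN⟩
  have hc : Q.corner ∈ R.set := h Q.corner_mem_set
  set y : Fin N → ℝ := Function.update Q.corner i0 (Q.corner i0 + R.side) with hy
  have hymem : y ∈ Q.set := by
    intro i
    by_cases hi : i = i0
    · subst hi
      rw [hy]
      simp only [Function.update_self]
      exact ⟨by linarith [R.side_pos], by linarith [hlt]⟩
    · rw [hy]
      rw [Function.update_of_ne hi]
      exact ⟨le_refl _, by linarith [Q.side_pos]⟩
  have h1 := (h hymem) i0
  rw [hy] at h1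
  simp only [Function.update_self] at h1
  have h2 := (hc i0).1
  linarith [h1.2]

lemma eq_of_subset_of_side (hN : 0 < N) {Q R : Cube N} (hsub : Q.set ⊆ R.set)
    (hside : R.side ≤ Q.side) : Q = R := by
  have hss : Q.side = R.side := le_antisymm (side_le_of_subset hN hsub) hside
  refine Cube.ext' ?_ hss
  funext i
  have hc := (hsub Q.corner_mem_set) i
  -- show Q.corner i = R.corner i
  by_contra hne
  have hba : R.corner i < Q.corner i := lt_of_le_of_ne hc.1 (fun hh => hne hh.symm)
  -- the point with i-th coordinate R.corner i + R.side lies in Q but not in R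
  set y : Fin N → ℝ := Function.update Q.corner i (R.corner i + R.side) with hy
  have hymem : y ∈ Q.set := by
    intro i'
    by_cases hi : i' = i
    · subst hi
      rw [hy]; simp only [Function.update_self]
      constructor
      · linarith [hc.2]
      · rw [hss]; linarith
    · rw [hy, Function.update_of_ne hi]
      exact ⟨le_refl _, by linarith [Q.side_pos]⟩
  have h1 := (hsub hymem) i
  rw [hy] at h1
  simp only [Function.update_self] at h1
  linarith [h1.2]

lemma dyadic_interval_step {k k' : ℤ} (hkk : k ≤ k') {m m' : ℤ} {x : ℝ}
    (h1 : (2:ℝ)^(-k) * m ≤ x) (h2 : x < (2:ℝ)^(-k) * m + (2:ℝ)^(-k))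
    (h3 : (2:ℝ)^(-k') * m' ≤ x) (h4 : x < (2:ℝ)^(-k') * m' + (2:ℝ)^(-k')) :
    (2:ℝ)^(-k) * m ≤ (2:ℝ)^(-k') * m' ∧
      (2:ℝ)^(-k') * m' + (2:ℝ)^(-k') ≤ (2:ℝ)^(-k) * m + (2:ℝ)^(-k) := by
  set p : ℤ := 2 ^ (k' - k).toNat with hp
  have hpcast : ((p : ℝ)) = (2:ℝ) ^ (k' - k) := by
    rw [hp]
    push_cast
    rw [← zpow_natCast (2:ℝ) (k' - k).toNat, Int.toNat_of_nonneg (by omega)]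
  have hb : (0:ℝ) < (2:ℝ)^(-k') := by positivity
  have ha : (0:ℝ) < (2:ℝ)^(-k) := by positivity
  have hab : (2:ℝ)^(-k) = (2:ℝ)^(-k') * p := by
    rw [hpcast, ← zpow_add₀ (two_ne_zero (α := ℝ))]
    congr 1
    omega
  -- integer inequalities
  have hint1 : p * m ≤ m' := by
    have hlt : (2:ℝ)^(-k') * ((p * m : ℤ) : ℝ) < (2:ℝ)^(-k') * ((m' + 1 : ℤ) : ℝ) := by
      push_cast
      calc (2:ℝ)^(-k') * ((p:ℝ) * m) = (2:ℝ)^(-k) * m := by rw [hab]; ring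
        _ ≤ x := h1
        _ < (2:ℝ)^(-k') * m' + (2:ℝ)^(-k') := h4
        _ = (2:ℝ)^(-k') * ((m':ℝ) + 1) := by ring
    have := (mul_lt_mul_iff_right₀ hb).1 hlt
    exact_mod_cast Int.lt_add_one_iff.1 (by exact_mod_cast this)
  have hint2 : m' + 1 ≤ p * (m + 1) := by
    have hlt : (2:ℝ)^(-k') * ((m' : ℤ) : ℝ) < (2:ℝ)^(-k') * ((p * (m + 1) : ℤ) : ℝ) := by
      push_cast
      calc (2:ℝ)^(-k') * (m' : ℝ) ≤ x := h3
        _ < (2:ℝ)^(-k) * m + (2:ℝ)^(-k) := h2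
        _ = (2:ℝ)^(-k) * ((m:ℝ) + 1) := by ring
        _ = (2:ℝ)^(-k') * ((p:ℝ) * ((m:ℝ) + 1)) := by rw [hab]; ring
    have := (mul_lt_mul_iff_right₀ hb).1 hlt
    have hzlt : m' < p * (m + 1) := by exact_mod_cast this
    omega
  constructor
  · calc (2:ℝ)^(-k) * m = (2:ℝ)^(-k') * ((p * m : ℤ) : ℝ) := by push_cast; rw [hab]; ring
      _ ≤ (2:ℝ)^(-k') * m' := by
        apply mul_le_mul_of_nonneg_left _ hb.le
        exact_mod_cast hint1
  · calc (2:ℝ)^(-k') * m' + (2:ℝ)^(-k') = (2:ℝ)^(-k') * ((m' + 1 : ℤ) : ℝ) := by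
          push_cast; ring
      _ ≤ (2:ℝ)^(-k') * ((p * (m + 1) : ℤ) : ℝ) := by
          apply mul_le_mul_of_nonneg_left _ hb.le
          exact_mod_cast hint2
      _ = (2:ℝ)^(-k) * m + (2:ℝ)^(-k) := by push_cast; rw [hab]; ring

lemma dyadic_nested_or_disjoint {Q R : Cube N} (hQ : Q.IsDyadic) (hR : R.IsDyadic)
    (hside : R.side ≤ Q.side) : R.set ⊆ Q.set ∨ Disjoint R.set Q.set := by
  obtain ⟨k, mq, hks, hkc⟩ := hQ
  obtain ⟨k', mr, hks', hkc'⟩ := hR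
  have hkk : k ≤ k' := by
    rw [hks, hks'] at hside
    have := (zpow_le_zpow_iff_right₀ (a := (2:ℝ)) one_lt_two).1 hside
    omega
  by_cases hxx : ∃ x, x ∈ R.set ∧ x ∈ Q.set
  · left
    obtain ⟨x, hxR, hxQ⟩ := hxx
    intro y hyR i
    have hQi := hxQ i
    have hRi := hxR i
    rw [hkc i, hks] at hQi
    rw [hkc' i, hks'] at hRi
    have hkey := dyadic_interval_step hkk hQi.1 hQi.2 hRi.1 hRi.2
    have hyi := hyR i
    rw [hkc' i, hks'] at hyi
    rw [hkc i, hks]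
    constructor
    · linarith [hkey.1, hyi.1]
    · linarith [hkey.2, hyi.2]
  · right
    rw [Set.disjoint_left]
    intro a haR haQ
    exact hxx ⟨a, haR, haQ⟩

/-- existence of maximal cubes above a given cube -/
lemma exists_maximal_in (hN : 0 < N) (Q₀ : Cube N) (hQ₀d : Q₀.IsDyadic)
    (G : Set (Cube N)) (hG : ∀ Q ∈ G, Q.IsDyadic ∧ Q.set ⊆ Q₀.set)
    {Q : Cube N} (hQ : Q ∈ G) :
    ∃ R ∈ G, Q.set ⊆ R.set ∧ ∀ R' ∈ G, R.set ⊆ R'.set → R' = R := by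
  obtain ⟨k₀, m₀, hk₀, _⟩ := hQ₀d
  set Pk : ℤ → Prop := fun k => ∃ R ∈ G, Q.set ⊆ R.set ∧ R.side = (2:ℝ)^(-k) with hPk
  have hex : ∃ k, Pk k := by
    obtain ⟨kq, mq, hkq, _⟩ := (hG Q hQ).1
    exact ⟨kq, Q, hQ, le_refl _, hkq⟩
  have hbdd : ∃ b : ℤ, ∀ z : ℤ, Pk z → b ≤ z := by
    refine ⟨k₀, ?_⟩
    rintro z ⟨R, hRG, _, hRs⟩
    have h1 : R.side ≤ Q₀.side := side_le_of_subset hN (hG R hRG).2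
    rw [hRs, hk₀] at h1
    have := (zpow_le_zpow_iff_right₀ (a := (2:ℝ)) one_lt_two).1 h1
    omega
  obtain ⟨kmin, ⟨R, hRG, hQR, hRs⟩, hleast⟩ := Int.exists_least_of_bdd hbdd hex
  refine ⟨R, hRG, hQR, ?_⟩
  intro R' hR'G hRR'
  obtain ⟨k', m', hk', _⟩ := (hG R' hR'G).1
  have hPk' : Pk k' := ⟨R', hR'G, hQR.trans hRR', hk'⟩
  have h1 : kmin ≤ k' := hleast k' hPk'
  have hside : R'.side ≤ R.side := by
    rw [hk', hRs]
    apply zpow_le_zpow_right₀ one_le_two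
    omega
  exact (eq_of_subset_of_side hN hRR' hside).symm


end CubeGeom
section Anal
variable {N d : ℕ}

lemma Cube.vol_pos (Q : Cube N) : 0 < Q.vol := pow_pos Q.side_pos N

lemma avg_congr_ae {Q : Cube N} {g g' : (Fin N → ℝ) → ℝ} (h : g =ᵐ[volume] g') :
    avg Q g = avg Q g' := by
  unfold avg
  rw [integral_congr_ae (ae_restrict_of_ae h)]

lemma avg_mono {Q : Cube N} {g g' : (Fin N → ℝ) → ℝ} (hg : IntegrableOn g Q.set)
    (hg' : IntegrableOn g' Q.set) (h : ∀ x, g x ≤ g' x) : avg Q g ≤ avg Q g' := by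
  unfold avg
  apply mul_le_mul_of_nonneg_left _ (inv_nonneg.2 Q.vol_pos.le)
  exact integral_mono hg hg' h

lemma abs_avg_le {Q : Cube N} {g : (Fin N → ℝ) → ℝ} :
    |avg Q g| ≤ avg Q (fun x => |g x|) := by
  unfold avg
  rw [abs_mul, abs_inv, abs_of_pos Q.vol_pos]
  apply mul_le_mul_of_nonneg_left _ (inv_nonneg.2 Q.vol_pos.le)
  have := norm_integral_le_integral_norm (μ := volume.restrict Q.set) g
  simpa [Real.norm_eq_abs] using this

lemma avg_sum {Q : Cube N} {ι : Type*} [Fintype ι] (F : ι → (Fin N → ℝ) → ℝ)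
    (h : ∀ i, IntegrableOn (F i) Q.set) :
    avg Q (fun x => ∑ i, F i x) = ∑ i, avg Q (F i) := by
  unfold avg
  rw [integral_finset_sum _ fun i _ => h i, Finset.mul_sum]

lemma avg_smul {Q : Cube N} (c : ℝ) (g : (Fin N → ℝ) → ℝ) :
    avg Q (fun x => c * g x) = c * avg Q g := by
  unfold avg
  rw [integral_const_mul]
  ring

lemma comp_integrable {f : (Fin N → ℝ) → Fin d → ℝ} (hf : Integrable f volume) (i : Fin d) :
    Integrable (fun x => f x i) volume := by
  have := (ContinuousLinearMap.proj (R := ℝ) (φ := fun _ : Fin d => ℝ) i).integrable_comp hf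
  exact this

lemma dot_integrable {f : (Fin N → ℝ) → Fin d → ℝ} (hf : Integrable f volume)
    (e : Fin d → ℝ) : Integrable (fun y => e ⬝ᵥ f y) volume := by
  have hfun : (fun y => e ⬝ᵥ f y) = fun y => ∑ i, e i * f y i := rfl
  rw [hfun]
  exact integrable_finset_sum _ fun i _ => (comp_integrable hf i).const_mul (e i)

lemma bdd_mul_integrable {g : (Fin N → ℝ) → ℝ} (hg : Integrable g volume)
    {φ : (Fin N → ℝ) → ℝ} (hφ : Measurable φ) (hb : ∀ x, |φ x| ≤ 1) :
    Integrable (fun x => φ x * g x) volume :=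
  hg.bdd_mul hφ.aestronglyMeasurable (ae_of_all _ fun x => by simpa using hb x)

lemma cbAvg_zero_mem (Q : Cube N) (f : (Fin N → ℝ) → Fin d → ℝ) :
    (0 : Fin d → ℝ) ∈ cbAvg Q f := by
  refine ⟨fun _ => 0, measurable_const, by norm_num, ?_⟩
  funext i
  simp [avg]

lemma cbAvg_neg_mem (Q : Cube N) (f : (Fin N → ℝ) → Fin d → ℝ)
    {u : Fin d → ℝ} (hu : u ∈ cbAvg Q f) : -u ∈ cbAvg Q f := by
  obtain ⟨φ, hφm, hφb, rfl⟩ := hu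
  refine ⟨fun x => -φ x, hφm.neg, fun x => by simpa using hφb x, ?_⟩
  funext i
  have : (fun x => -φ x * f x i) = fun x => -(φ x * f x i) := by funext x; ring
  rw [this]
  unfold avg
  rw [integral_neg]
  simp [mul_neg]

lemma cbAvg_convex (Q : Cube N) {f : (Fin N → ℝ) → Fin d → ℝ}
    (hf : Integrable f volume) : Convex ℝ (cbAvg Q f) := by
  rintro u ⟨φ, hφm, hφb, rfl⟩ u' ⟨ψ, hψm, hψb, rfl⟩ a b ha hb hab
  refine ⟨fun x => a * φ x + b * ψ x, (hφm.const_mul a).add (hψm.const_mul b), ?_, ?_⟩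
  · intro x
    calc |a * φ x + b * ψ x| ≤ |a * φ x| + |b * ψ x| := abs_add_le _ _
      _ = a * |φ x| + b * |ψ x| := by
          rw [abs_mul, abs_mul, abs_of_nonneg ha, abs_of_nonneg hb]
      _ ≤ a * 1 + b * 1 := by
          apply add_le_add
          · exact mul_le_mul_of_nonneg_left (hφb x) ha
          · exact mul_le_mul_of_nonneg_left (hψb x) hb
      _ = 1 := by rw [mul_one, mul_one, hab]
  · funext i
    have hint1 : IntegrableOn (fun x => φ x * f x i) Q.set :=
      (bdd_mul_integrable (comp_integrable hf i) hφm hφb).integrableOn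
    have hint2 : IntegrableOn (fun x => ψ x * f x i) Q.set :=
      (bdd_mul_integrable (comp_integrable hf i) hψm hψb).integrableOn
    have hpt : (fun x => (a * φ x + b * ψ x) * f x i) =
        fun x => a * (φ x * f x i) + b * (ψ x * f x i) := by
      funext x; ring
    simp only [Pi.add_apply, Pi.smul_apply, smul_eq_mul]
    rw [hpt]
    unfold avg
    rw [integral_add ((hint1.const_mul a)) ((hint2.const_mul b)),
      integral_const_mul, integral_const_mul]
    ring

lemma dot_cbAvg_eq (Q : Cube N) {f : (Fin N → ℝ) → Fin d → ℝ} (hf : Integrable f volume)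
    (e : Fin d → ℝ) {φ : (Fin N → ℝ) → ℝ} (hφm : Measurable φ) (hφb : ∀ x, |φ x| ≤ 1) :
    e ⬝ᵥ (fun i => avg Q fun x => φ x * f x i) = avg Q (fun x => φ x * (e ⬝ᵥ f x)) := by
  have hstep : e ⬝ᵥ (fun i => avg Q fun x => φ x * f x i) =
      ∑ i, avg Q (fun x => e i * (φ x * f x i)) := by
    simp only [dotProduct]
    exact Finset.sum_congr rfl fun i _ => by rw [avg_smul]
  rw [hstep, ← avg_sum]
  · apply avg_congr_ae
    apply ae_of_all
    intro x
    simp only [dotProduct, Finset.mul_sum]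
    exact Finset.sum_congr rfl fun i _ => by ring
  · intro i
    exact ((bdd_mul_integrable (comp_integrable hf i) hφm hφb).const_mul (e i)).integrableOn

lemma cbAvg_dot_bound (Q : Cube N) {f : (Fin N → ℝ) → Fin d → ℝ} (hf : Integrable f volume)
    (e : Fin d → ℝ) {u : Fin d → ℝ} (hu : u ∈ cbAvg Q f) :
    |e ⬝ᵥ u| ≤ avg Q (fun y => |e ⬝ᵥ f y|) := by
  obtain ⟨φ, hφm, hφb, rfl⟩ := hu
  rw [dot_cbAvg_eq Q hf e hφm hφb]
  calc |avg Q fun x => φ x * (e ⬝ᵥ f x)| ≤ avg Q (fun x => |φ x * (e ⬝ᵥ f x)|) := abs_avg_le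
    _ ≤ avg Q (fun y => |e ⬝ᵥ f y|) := by
        apply avg_mono
        · exact (bdd_mul_integrable (dot_integrable hf e) hφm hφb).abs.integrableOn
        · exact (dot_integrable hf e).abs.integrableOn
        · intro x
          rw [abs_mul]
          calc |φ x| * |e ⬝ᵥ f x| ≤ 1 * |e ⬝ᵥ f x| :=
                mul_le_mul_of_nonneg_right (hφb x) (abs_nonneg _)
            _ = |e ⬝ᵥ f x| := one_mul _

lemma cbAvg_dot_realize (Q : Cube N) {f : (Fin N → ℝ) → Fin d → ℝ} (hf : Integrable f volume)
    (e : Fin d → ℝ) :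
    ∃ u ∈ cbAvg Q f, avg Q (fun y => |e ⬝ᵥ f y|) = e ⬝ᵥ u := by
  classical
  set f' := (hf.1.mk f) with hf'
  have hf'meas : StronglyMeasurable f' := hf.1.stronglyMeasurable_mk
  have haef : f =ᵐ[volume] f' := hf.1.ae_eq_mk
  have hgmeas : Measurable (fun y => e ⬝ᵥ f' y) := by
    have hm : Measurable f' := hf'meas.measurable
    have : ∀ i, Measurable (fun y => f' y i) := fun i => (measurable_pi_apply i).comp hm
    exact Finset.univ.measurable_sum (fun i _ => ((this i).const_mul (e i)))
  set φ : (Fin N → ℝ) → ℝ := fun y => if 0 ≤ e ⬝ᵥ f' y then 1 else -1 with hφ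
  have hφm : Measurable φ := Measurable.ite (measurableSet_le measurable_const hgmeas)
    measurable_const measurable_const
  have hφb : ∀ x, |φ x| ≤ 1 := by
    intro x
    simp only [hφ]
    split <;> norm_num
  refine ⟨fun i => avg Q fun x => φ x * f x i, ⟨φ, hφm, hφb, rfl⟩, ?_⟩
  rw [dot_cbAvg_eq Q hf e hφm hφb]
  apply avg_congr_ae
  filter_upwards [haef] with x hx
  simp only [hφ, hx]
  split
  · next h => rw [abs_of_nonneg h, one_mul]
  · next h => rw [abs_of_neg (lt_of_not_ge h)]; ring

end Anal

section Glue
variable {N d : ℕ}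

lemma tsum_ind_of_mem {β : Type*} [AddCommMonoid β] [TopologicalSpace β] [T2Space β]
    {G₁ : Set (Cube N)} (hdisj : G₁.PairwiseDisjoint Cube.set)
    (F : Cube N → (Fin N → ℝ) → β) {x : Fin N → ℝ} {q : Cube N}
    (hq : q ∈ G₁) (hx : x ∈ q.set) :
    (∑' Q : G₁, Set.indicator (Q : Cube N).set (F (Q : Cube N)) x) = F q x := by
  have hz : ∀ q' : G₁, q' ≠ (⟨q, hq⟩ : G₁) →
      Set.indicator (q' : Cube N).set (F (q' : Cube N)) x = 0 := by
    intro q' hne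
    apply Set.indicator_of_notMem
    intro hx'
    have hd : Disjoint (Cube.set (q' : Cube N)) (Cube.set q) :=
      hdisj q'.2 hq (fun hv => hne (Subtype.ext hv))
    exact Set.disjoint_left.1 hd hx' hx
  rw [tsum_eq_single (⟨q, hq⟩ : G₁) hz]
  exact Set.indicator_of_mem hx _

lemma tsum_ind_of_not {β : Type*} [AddCommMonoid β] [TopologicalSpace β] [T2Space β]
    {G₁ : Set (Cube N)} (F : Cube N → (Fin N → ℝ) → β) {x : Fin N → ℝ}
    (hnot : ∀ Q ∈ G₁, x ∉ Q.set) :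
    (∑' Q : G₁, Set.indicator (Q : Cube N).set (F (Q : Cube N)) x) = 0 := by
  have hz : ∀ q : G₁, Set.indicator (q : Cube N).set (F (q : Cube N)) x = 0 :=
    fun q => Set.indicator_of_notMem (hnot q q.2) _
  rw [tsum_congr hz]
  exact tsum_zero

lemma vecApply_dot {T : ((Fin N → ℝ) → ℝ) → ((Fin N → ℝ) → ℝ)} (hlin : IsLinearMap ℝ T)
    (F : (Fin N → ℝ) → Fin d → ℝ) (e : Fin d → ℝ) (x : Fin N → ℝ) :
    e ⬝ᵥ vecApply T F x = T (fun y => e ⬝ᵥ F y) x := by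
  have hfun : (fun y => e ⬝ᵥ F y) = ∑ i : Fin d, e i • (fun y => F y i) := by
    funext y
    rw [Finset.sum_apply]
    simp only [Pi.smul_apply, smul_eq_mul]
    rfl
  rw [hfun]
  have hT : T (∑ i : Fin d, e i • (fun y => F y i)) =
      ∑ i : Fin d, e i • T (fun y => F y i) := by
    have h1 := map_sum (IsLinearMap.mk' T hlin) (fun i => e i • (fun y => F y i)) Finset.univ
    rw [show (IsLinearMap.mk' T hlin) (∑ i : Fin d, e i • fun y => F y i)
      = T (∑ i : Fin d, e i • fun y => F y i) from rfl] at h1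
    rw [h1]
    apply Finset.sum_congr rfl
    intro i _
    rw [LinearMap.map_smul]
    rfl
  rw [hT, Finset.sum_apply]
  simp only [Pi.smul_apply, smul_eq_mul]
  rfl

lemma indicator_dot (S : Set (Fin N → ℝ)) (f : (Fin N → ℝ) → Fin d → ℝ) (e : Fin d → ℝ) :
    (fun y => e ⬝ᵥ (Set.indicator S f y)) = Set.indicator S (fun y => e ⬝ᵥ f y) := by
  funext y
  by_cases hy : y ∈ S
  · rw [Set.indicator_of_mem hy, Set.indicator_of_mem hy]
  · rw [Set.indicator_of_notMem hy, Set.indicator_of_notMem hy]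
    simp

end Glue

end Aux

/-- From scalar sparse-domination induction step to the vector-valued
(convex body) induction step. -/
theorem scalar_to_vector_induction_step
    (N d : ℕ) (hN : 0 < N) (hd : 0 < d) (r : ℝ) (hr : 1 ≤ r)
    (T : ((Fin N → ℝ) → ℝ) → ((Fin N → ℝ) → ℝ)) (hlin : IsLinearMap ℝ T)
    (C : ℝ) (hC : 0 < C)
    (hyp : ∀ ε : ℝ, 0 < ε → ∀ Q₀ : Cube N, Q₀.IsDyadic →
      ∀ f : (Fin N → ℝ) → ℝ, Integrable f volume →
        (∀ x, x ∉ (Q₀.dilate r).set → f x = 0) →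
        ∃ G : Set (Cube N),
          (∀ Q ∈ G, Q.IsDyadic ∧ Q.set ⊆ Q₀.set) ∧
          G.PairwiseDisjoint Cube.set ∧
          (∀ F : Finset (Cube N), ↑F ⊆ G → ∑ Q ∈ F, Q.vol ≤ ε * Q₀.vol) ∧
          (∀ᵐ x ∂(volume.restrict Q₀.set),
            |T f x - ∑' Q : G, Set.indicator (Q : Cube N).set
                (fun x' => T (Set.indicator ((Q : Cube N).dilate r).set f) x') x|
              ≤ C * ε⁻¹ * avg (Q₀.dilate r) fun y => |f y|) ∧
          (∀ G' : Set (Cube N), (∀ R ∈ G', R.IsDyadic ∧ R.set ⊆ Q₀.set) →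
            G'.PairwiseDisjoint Cube.set → (∀ Q ∈ G, ∃ R ∈ G', Q.set ⊆ R.set) →
            ∀ᵐ x ∂(volume.restrict Q₀.set),
              |T f x - ∑' Q : G', Set.indicator (Q : Cube N).set
                  (fun x' => T (Set.indicator ((Q : Cube N).dilate r).set f) x') x|
                ≤ C * ε⁻¹ * avg (Q₀.dilate r) fun y => |f y|)) :
    ∀ δ : ℝ, 0 < δ → δ < 1 →
      ∃ C' : ℝ, 0 < C' ∧
        ∀ Q₀ : Cube N, Q₀.IsDyadic →
          ∀ f : (Fin N → ℝ) → Fin d → ℝ, Integrable f volume →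
            (∀ x, x ∉ (Q₀.dilate r).set → f x = 0) →
            ∃ G₁ : Set (Cube N),
              (∀ Q ∈ G₁, Q.IsDyadic ∧ Q.set ⊆ Q₀.set) ∧
              G₁.PairwiseDisjoint Cube.set ∧
              (∀ F : Finset (Cube N), ↑F ⊆ G₁ → ∑ Q ∈ F, Q.vol ≤ δ * Q₀.vol) ∧
              ∀ᵐ x ∂(volume.restrict Q₀.set),
                vecApply T f x - (∑' Q : G₁, Set.indicator (Q : Cube N).set
                    (fun x' => vecApply T (Set.indicator ((Q : Cube N).dilate r).set f) x') x)
                  ∈ C' • cbAvg (Q₀.dilate r) f := by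
  intro δ hδ0 hδ1
  classical
  have hn0 : (0:ℝ) < ((2 * d : ℕ) : ℝ) := by
    have h2d : 0 < 2 * d := by omega
    exact_mod_cast h2d
  set ε : ℝ := δ / ((2 * d : ℕ) : ℝ) with hε
  have hε0 : 0 < ε := div_pos hδ0 hn0
  set A : ℝ := C * ε⁻¹ with hA
  have hA0 : 0 < A := mul_pos hC (inv_pos.2 hε0)
  refine ⟨((2 * d : ℕ) : ℝ) * A, mul_pos hn0 hA0, ?_⟩
  intro Q₀ hQ₀d f hfint hfsupp
  set Q' : Cube N := Q₀.dilate r with hQ'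
  set K : Set (Fin d → ℝ) := cbAvg Q' f with hK
  set hfn : (Fin d → ℝ) → ℝ := fun e => avg Q' (fun y => |e ⬝ᵥ f y|) with hhfn
  obtain ⟨E, hcore⟩ := core_lemma K hfn (cbAvg_zero_mem Q' f)
    (fun u hu => cbAvg_neg_mem Q' f hu) (cbAvg_convex Q' hfint)
    (fun e => cbAvg_dot_realize Q' hfint e)
    (fun e u hu => cbAvg_dot_bound Q' hfint e hu)
  -- apply the scalar hypothesis in each direction
  have hhyp := fun j : Fin (2 * d) =>
    hyp ε hε0 Q₀ hQ₀d (fun y => E j ⬝ᵥ f y) (dot_integrable hfint (E j))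
      (fun x hx => by show E j ⬝ᵥ f x = 0; rw [hfsupp x hx]; simp)
  choose G hGd hGdisj hGsum hGae hGae' using hhyp
  -- union and its maximal subfamily
  set Gall : Set (Cube N) := ⋃ j, G j with hGall
  have hGalld : ∀ Q ∈ Gall, Q.IsDyadic ∧ Q.set ⊆ Q₀.set := by
    intro Q hQ
    rw [hGall, Set.mem_iUnion] at hQ
    obtain ⟨j, hj⟩ := hQ
    exact hGd j Q hj
  set G₁ : Set (Cube N) := {Q | Q ∈ Gall ∧ ∀ R ∈ Gall, Q.set ⊆ R.set → R = Q} with hG₁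
  have hG₁d : ∀ Q ∈ G₁, Q.IsDyadic ∧ Q.set ⊆ Q₀.set := fun Q hQ => hGalld Q hQ.1
  have hG₁disj : G₁.PairwiseDisjoint Cube.set := by
    intro Q hQ R hR hne
    have hQd := (hGalld Q hQ.1).1
    have hRd := (hGalld R hR.1).1
    rcases le_total R.side Q.side with hs | hs
    · rcases dyadic_nested_or_disjoint hQd hRd hs with hsub | hdis
      · exact absurd (hR.2 Q hQ.1 hsub) hne
      · exact hdis.symm
    · rcases dyadic_nested_or_disjoint hRd hQd hs with hsub | hdis
      · exact absurd (hQ.2 R hR.1 hsub) (Ne.symm hne)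
      · exact hdis
  have hG₁cover : ∀ Q ∈ Gall, ∃ Rq ∈ G₁, Q.set ⊆ Rq.set := by
    intro Q hQ
    obtain ⟨Rr, hRG, hQR, hmax⟩ := exists_maximal_in hN Q₀ hQ₀d Gall hGalld hQ
    exact ⟨Rr, ⟨hRG, hmax⟩, hQR⟩
  -- the measure bound
  have hG₁sum : ∀ F : Finset (Cube N), ↑F ⊆ G₁ → ∑ Q ∈ F, Q.vol ≤ δ * Q₀.vol := by
    intro F hF
    set σ : Cube N → Fin (2 * d) := fun Q =>
      if hq : ∃ j, Q ∈ G j then hq.choose else ⟨0, by omega⟩ with hσ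
    have hσmem : ∀ Q ∈ F, Q ∈ G (σ Q) := by
      intro Q hQ
      have hmem : Q ∈ Gall := (hF hQ).1
      rw [hGall, Set.mem_iUnion] at hmem
      have hq : ∃ j, Q ∈ G j := hmem
      simp only [hσ, dif_pos hq]
      exact hq.choose_spec
    calc ∑ Q ∈ F, Q.vol
        = ∑ j : Fin (2 * d), ∑ Q ∈ F.filter (fun Q => σ Q = j), Q.vol :=
          (Finset.sum_fiberwise F σ Cube.vol).symm
      _ ≤ ∑ _j : Fin (2 * d), ε * Q₀.vol := by
          apply Finset.sum_le_sum
          intro j _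
          apply hGsum j
          intro Q hQ
          rw [Finset.mem_coe, Finset.mem_filter] at hQ
          exact hQ.2 ▸ hσmem Q hQ.1
      _ = ((2 * d : ℕ) : ℝ) * (ε * Q₀.vol) := by
          rw [Finset.sum_const, Finset.card_univ, Fintype.card_fin, nsmul_eq_mul]
      _ = δ * Q₀.vol := by
          rw [hε]
          field_simp
  -- the a.e. estimates with the common family G₁
  have hcov : ∀ j : Fin (2 * d), ∀ Q ∈ G j, ∃ Rq ∈ G₁, Q.set ⊆ Rq.set := by
    intro j Q hQ
    exact hG₁cover Q (by rw [hGall, Set.mem_iUnion]; exact ⟨j, hQ⟩)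
  have hae := fun j : Fin (2 * d) => hGae' j G₁ hG₁d hG₁disj (hcov j)
  refine ⟨G₁, hG₁d, hG₁disj, hG₁sum, ?_⟩
  have haeall := (MeasureTheory.ae_all_iff).2 hae
  filter_upwards [haeall] with x hx
  apply hcore A hA0
  intro j
  have hkey : E j ⬝ᵥ (vecApply T f x - ∑' Q : G₁, Set.indicator (Q : Cube N).set
        (fun x' => vecApply T (Set.indicator ((Q : Cube N).dilate r).set f) x') x)
      = T (fun y => E j ⬝ᵥ f y) x - ∑' Q : G₁, Set.indicator (Q : Cube N).set
        (fun x' => T (Set.indicator ((Q : Cube N).dilate r).set (fun y => E j ⬝ᵥ f y)) x') x := by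
    rw [dotProduct_sub]
    congr 1
    · exact vecApply_dot hlin f (E j) x
    · by_cases hex : ∃ q ∈ G₁, x ∈ Cube.set q
      · obtain ⟨q, hq, hxq⟩ := hex
        rw [tsum_ind_of_mem hG₁disj
          (fun Qc => fun x' => vecApply T (Set.indicator (Qc.dilate r).set f) x') hq hxq,
          tsum_ind_of_mem hG₁disj
          (fun Qc => fun x' => T (Set.indicator (Qc.dilate r).set (fun y => E j ⬝ᵥ f y)) x') hq hxq]
        rw [vecApply_dot hlin _ (E j) x]
        congr 1
        exact indicator_dot _ f (E j)
      · push_neg at hex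
        rw [tsum_ind_of_not
          (fun Qc => fun x' => vecApply T (Set.indicator (Qc.dilate r).set f) x') hex,
          tsum_ind_of_not
          (fun Qc => fun x' => T (Set.indicator (Qc.dilate r).set (fun y => E j ⬝ᵥ f y)) x') hex]
        simp
  have hAh : A * hfn (E j) = C * ε⁻¹ * avg Q' (fun y => |E j ⬝ᵥ f y|) := by
    simp only [hA, hhfn]
  rw [hkey, hAh]
  exact hx j


end CBD
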